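/- Let m be a positive integer, n ∈ ℕ^m, s ≥ 1 a natural number. Then the sum, over all s-tuples (k_1, …, k_s) of elements of ℕ^m with k_1 + ⋯ + k_s = n (componentwise), of the product over i from 1 to s of the ordinary multinomial coefficient |k_i|!/(k_{i,1}!⋯k_{i,m}!), equals binom(|n|+s−1, |n|) times |n|!/(n_1!⋯n_m!), where |k| denotes the sum of the components of k and binom denotes the ordinary binomial coefficient of natural numbers. -/

import Mathlib

open Finset MvPolynomial

private lemma aux_mono {m : ℕ} (d : Fin m → ℕ) :
    (∏ j, (X j : MvPolynomial (Fin m) ℕ) ^ d j) =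
      monomial (Finsupp.equivFunOnFinite.symm d) 1 := by
  rw [← MvPolynomial.prod_X_pow_eq_monomial]
  refine (Finset.prod_subset (Finset.subset_univ _) ?_).symm
  intro x _ hx
  have : Finsupp.equivFunOnFinite.symm d x = 0 := Finsupp.notMem_support_iff.mp hx
  simp only [Finsupp.equivFunOnFinite_symm_apply_apply] at this ⊢
  simp [this]

private lemma aux_coeff {m : ℕ} (c : ℕ) (d n : Fin m → ℕ) :
    MvPolynomial.coeff (Finsupp.equivFunOnFinite.symm n)
      ((c : MvPolynomial (Fin m) ℕ) * ∏ j, X j ^ d j) =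
      if d = n then c else 0 := by
  rw [aux_mono, ← MvPolynomial.C_eq_coe_nat, MvPolynomial.coeff_C_mul,
    MvPolynomial.coeff_monomial]
  by_cases h : d = n
  · subst h; simp
  · rw [if_neg h, if_neg, mul_zero]
    exact fun hc => h (Finsupp.equivFunOnFinite.symm.injective hc)

private lemma coeff_Y_pow {m : ℕ} (n : Fin m → ℕ) (p : ℕ) :
    MvPolynomial.coeff (Finsupp.equivFunOnFinite.symm n)
      ((∑ j : Fin m, (X j : MvPolynomial (Fin m) ℕ)) ^ p) =
      if ∑ j, n j = p then Nat.multinomial Finset.univ n else 0 := by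
  rw [Finset.sum_pow_eq_sum_piAntidiag, MvPolynomial.coeff_sum]
  simp only [aux_coeff]
  rw [Finset.sum_ite_eq' (univ.piAntidiag p) n (fun x => Nat.multinomial Finset.univ x)]
  simp [Finset.mem_piAntidiag, eq_comm]

theorem sum_prod_multinomial (m : ℕ) (hm : 0 < m) (n : Fin m → ℕ) (s : ℕ) (hs : 1 ≤ s) :
    ∑ k ∈ (Finset.Iic (fun _ : Fin s => n)).filter (fun k => ∑ i, k i = n),
        ∏ i, Nat.multinomial Finset.univ (k i) =
      ((∑ j, n j) + s - 1).choose (∑ j, n j) * Nat.multinomial Finset.univ n := by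
  classical
  set T := ∑ j, n j with hT
  set Y : MvPolynomial (Fin m) ℕ := ∑ j, X j with hY
  set P : MvPolynomial (Fin m) ℕ := ∑ p ∈ Finset.range (T+1), Y ^ p with hP
  set B : Finset (Fin m → ℕ) :=
    (Finset.range (T+1)).biUnion (fun p => Finset.piAntidiag Finset.univ p) with hB
  have hmemB : ∀ d : Fin m → ℕ, d ∈ B ↔ ∑ j, d j ≤ T := by
    intro d
    simp only [hB, Finset.mem_biUnion, Finset.mem_range, Nat.lt_succ_iff,
      Finset.mem_piAntidiag, Finset.mem_univ, ne_eq]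
    constructor
    · rintro ⟨p, hp, h, -⟩; exact le_trans (le_of_eq h) hp
    · intro h; exact ⟨∑ j, d j, h, rfl, fun i _ => trivial⟩
  have hpow : P ^ s = ∏ _i : Fin s, P := by
    rw [Finset.prod_const, Finset.card_univ, Fintype.card_fin]
  -- first computation of the coefficient
  have key1 : MvPolynomial.coeff (Finsupp.equivFunOnFinite.symm n) (P ^ s)
      = (T + s - 1).choose T * Nat.multinomial Finset.univ n := by
    have hPs1 : P ^ s =
        ∑ N ∈ Fintype.piFinset (fun _ : Fin s => Finset.range (T+1)), Y ^ (∑ i, N i) := by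
      rw [hpow, hP, Finset.prod_univ_sum]
      exact Finset.sum_congr rfl fun N _ => by rw [Finset.prod_pow_eq_pow_sum]
    rw [hPs1, MvPolynomial.coeff_sum]
    simp only [hY, coeff_Y_pow, ← hT]
    rw [← Finset.sum_filter, Finset.sum_const, smul_eq_mul]
    congr 1
    have hfe : (Fintype.piFinset (fun _ : Fin s => Finset.range (T+1))).filter
        (fun N => T = ∑ i, N i) = Finset.piAntidiag Finset.univ T := by
      ext N
      simp only [Finset.mem_filter, Fintype.mem_piFinset, Finset.mem_range, Nat.lt_succ_iff,
        Finset.mem_piAntidiag, Finset.mem_univ, ne_eq]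
      constructor
      · rintro ⟨-, h⟩; exact ⟨h.symm, fun i _ => trivial⟩
      · rintro ⟨h, -⟩
        exact ⟨fun i => h ▸ Finset.single_le_sum (fun _ _ => Nat.zero_le _) (Finset.mem_univ i),
          h.symm⟩
    rw [hfe, ← Finset.map_sym_eq_piAntidiag, Finset.card_map, Finset.sym_univ, Finset.card_univ,
      Sym.card_sym_eq_multichoose, Fintype.card_fin, Nat.multichoose_eq, Nat.add_comm s T]
  -- second computation of the coefficient
  have hPB : P = ∑ d ∈ B,
      (Nat.multinomial Finset.univ d : MvPolynomial (Fin m) ℕ) * ∏ j, X j ^ d j := by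
    rw [hB, Finset.sum_biUnion]
    · exact Finset.sum_congr rfl fun p _ => Finset.sum_pow_eq_sum_piAntidiag _ _ _
    · intro p hp q hq hpq
      simp only [Function.onFun, Finset.disjoint_left, Finset.mem_piAntidiag]
      rintro a ⟨rfl, -⟩ ⟨rfl, -⟩
      exact hpq rfl
  have key2 : MvPolynomial.coeff (Finsupp.equivFunOnFinite.symm n) (P ^ s) =
      ∑ k ∈ (Finset.Iic (fun _ : Fin s => n)).filter (fun k => ∑ i, k i = n),
        ∏ i, Nat.multinomial Finset.univ (k i) := by
    have hPs2 : P ^ s = ∑ k ∈ Fintype.piFinset (fun _ : Fin s => B),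
        ((∏ i, Nat.multinomial Finset.univ (k i) : ℕ) : MvPolynomial (Fin m) ℕ) *
          ∏ j, X j ^ (∑ i, k i j) := by
      rw [hpow]
      conv_lhs => rw [hPB]
      rw [Finset.prod_univ_sum]
      refine Finset.sum_congr rfl fun k _ => ?_
      rw [Finset.prod_mul_distrib, Nat.cast_prod]
      congr 1
      rw [Finset.prod_comm]
      exact Finset.prod_congr rfl fun j _ => by rw [Finset.prod_pow_eq_pow_sum]
    rw [hPs2, MvPolynomial.coeff_sum]
    simp only [aux_coeff]
    rw [← Finset.sum_filter]
    apply Finset.sum_congr _ (fun _ _ => rfl)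
    ext k
    have hcond : ((fun j => ∑ i, k i j) = n) ↔ (∑ i, k i = n) := by
      simp [_root_.funext_iff, Finset.sum_apply]
    simp only [Finset.mem_filter, Fintype.mem_piFinset, Finset.mem_Iic, hcond]
    constructor
    · rintro ⟨-, h⟩; refine ⟨?_, h⟩
      intro i j
      calc k i j ≤ ∑ i', k i' j := Finset.single_le_sum (f := fun i' => k i' j)
            (fun _ _ => Nat.zero_le _) (Finset.mem_univ i)
        _ = n j := by rw [← Finset.sum_apply, h]
    · rintro ⟨hle, h⟩; refine ⟨fun i => ?_, h⟩
      rw [hmemB]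
      exact Finset.sum_le_sum fun j _ => hle i j
  rw [← key2, key1]
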